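/- Duchet–Meyniel: If G is a finite simple graph with no K_t minor, then for every non-empty subgraph H of G, |V(H)| ≤ 2(t−1)·α(H); equivalently, the Hall ratio of G is at most 2(t−1). -/

import Mathlib

open SimpleGraph

def HasMinor {V W : Type*} (G : SimpleGraph V) (H : SimpleGraph W) : Prop :=
  ∃ X : W → Set V, (∀ w, (G.induce (X w)).Connected) ∧
    (∀ w₁ w₂, w₁ ≠ w₂ → Disjoint (X w₁) (X w₂)) ∧
    (∀ w₁ w₂, H.Adj w₁ w₂ → ∃ a ∈ X w₁, ∃ b ∈ X w₂, G.Adj a b)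

/-- The independence number of a graph. -/
noncomputable def indepNum {V : Type*} (G : SimpleGraph V) : ℕ :=
  sSup {n | ∃ I : Set V, (∀ u ∈ I, ∀ v ∈ I, ¬ G.Adj u v) ∧ I.ncard = n}

noncomputable def indepNumOn {V : Type*} (G : SimpleGraph V) (S : Set V) : ℕ :=
  sSup {n | ∃ I : Set V, I ⊆ S ∧ (∀ u ∈ I, ∀ v ∈ I, ¬ G.Adj u v) ∧ I.ncard = n}

noncomputable def hallRatio {V : Type*} (G : SimpleGraph V) : ℝ :=
  sSup {x : ℝ | ∃ S : Set V, S.Nonempty ∧ x = (S.ncard : ℝ) / (indepNumOn G S : ℝ)}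


section Aux
variable {V : Type*} (G : SimpleGraph V)

def StepRel (S : Set V) : V → V → Prop := fun x y => x ∈ S ∧ y ∈ S ∧ G.Adj x y

def ConnOn (S : Set V) : Prop :=
  S.Nonempty ∧ ∀ a ∈ S, ∀ b ∈ S, Relation.ReflTransGen (StepRel G S) a b

def CliqueMinorIn (S : Set V) (k : ℕ) : Prop :=
  ∃ X : Fin k → Set V, (∀ i, X i ⊆ S) ∧ (∀ i, ConnOn G (X i)) ∧
    (∀ i j, i ≠ j → Disjoint (X i) (X j)) ∧
    (∀ i j, i ≠ j → ∃ a ∈ X i, ∃ b ∈ X j, G.Adj a b)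

variable {G}

lemma stepRel_symm (S : Set V) : Symmetric (StepRel G S) :=
  fun _ _ ⟨hx, hy, h⟩ => ⟨hy, hx, h.symm⟩

lemma chain_symm {S : Set V} {a b : V} (h : Relation.ReflTransGen (StepRel G S) a b) :
    Relation.ReflTransGen (StepRel G S) b a :=
  Relation.ReflTransGen.mono (r := Function.swap (StepRel G S)) (fun _ _ hxy => stepRel_symm S hxy) b a
    (Relation.reflTransGen_swap.mpr h)

lemma chain_mono {S T : Set V} (hST : S ⊆ T) {a b : V}
    (h : Relation.ReflTransGen (StepRel G S) a b) :
    Relation.ReflTransGen (StepRel G T) a b :=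
  Relation.ReflTransGen.mono (r := StepRel G S) (fun x y ⟨hx, hy, hadj⟩ => ⟨hST hx, hST hy, hadj⟩) a b h

lemma connOn_singleton (v : V) : ConnOn G {v} := by
  refine ⟨⟨v, rfl⟩, ?_⟩
  rintro a rfl b rfl
  exact Relation.ReflTransGen.refl

lemma ConnOn.insert {D : Set V} (h : ConnOn G D) {z d : V} (hd : d ∈ D) (hzd : G.Adj z d) :
    ConnOn G (Insert.insert z D) := by
  obtain ⟨hne, hcon⟩ := h
  have hsub : D ⊆ Insert.insert z D := Set.subset_insert _ _
  have hz : z ∈ Insert.insert z D := Set.mem_insert _ _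
  have hstep : Relation.ReflTransGen (StepRel G (Insert.insert z D)) z d :=
    Relation.ReflTransGen.single ⟨hz, hsub hd, hzd⟩
  have key : ∀ a ∈ Insert.insert z D, Relation.ReflTransGen (StepRel G (Insert.insert z D)) z a := by
    rintro a (rfl | ha)
    · exact Relation.ReflTransGen.refl
    · exact hstep.trans (chain_mono hsub (hcon d hd a ha))
  refine ⟨⟨z, hz⟩, fun a ha b hb => (chain_symm (key a ha)).trans (key b hb)⟩

lemma ConnOn.induce_connected {A : Set V} (h : ConnOn G A) : (G.induce A).Connected := by
  obtain ⟨⟨v, hv⟩, hcon⟩ := h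
  have : Nonempty A := ⟨⟨v, hv⟩⟩
  refine ⟨fun a b => ?_⟩
  have key : ∀ (x y : V) (hxy : Relation.ReflTransGen (StepRel G A) x y)
      (hx : x ∈ A) (hy : y ∈ A), (G.induce A).Reachable ⟨x, hx⟩ ⟨y, hy⟩ := by
    intro x y hxy
    induction hxy with
    | refl => intro hx hy; rfl
    | tail _ step ih =>
      intro hx hy
      obtain ⟨hb, hc, hadj⟩ := step
      exact (ih hx hb).trans (SimpleGraph.Adj.reachable (by exact hadj))
  exact key a b (hcon a a.2 b b.2) a.2 b.2

end Aux

section Aux2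
variable {V : Type*} [Fintype V] {G : SimpleGraph V}

lemma indepSet_bddAbove (S : Set V) :
    BddAbove {n | ∃ I : Set V, I ⊆ S ∧ (∀ u ∈ I, ∀ v ∈ I, ¬ G.Adj u v) ∧ I.ncard = n} := by
  refine ⟨Fintype.card V, ?_⟩
  rintro n ⟨I, -, -, rfl⟩
  calc I.ncard ≤ (Set.univ : Set V).ncard := Set.ncard_le_ncard (Set.subset_univ I) Set.finite_univ
    _ = Fintype.card V := by rw [Set.ncard_univ, Nat.card_eq_fintype_card]

lemma indepSet_nonempty (S : Set V) :
    Set.Nonempty {n | ∃ I : Set V, I ⊆ S ∧ (∀ u ∈ I, ∀ v ∈ I, ¬ G.Adj u v) ∧ I.ncard = n} :=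
  ⟨0, ∅, Set.empty_subset S, by simp, by simp⟩

lemma le_indepNumOn {S I : Set V} (hIS : I ⊆ S) (hind : ∀ u ∈ I, ∀ v ∈ I, ¬ G.Adj u v) :
    I.ncard ≤ indepNumOn G S :=
  le_csSup (indepSet_bddAbove S) ⟨I, hIS, hind, rfl⟩

lemma indepNumOn_attained (S : Set V) :
    ∃ I : Set V, I ⊆ S ∧ (∀ u ∈ I, ∀ v ∈ I, ¬ G.Adj u v) ∧ I.ncard = indepNumOn G S := by
  have := Nat.sSup_mem (indepSet_nonempty (G := G) S) (indepSet_bddAbove S)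
  exact this

lemma one_le_indepNumOn {S : Set V} (hS : S.Nonempty) : 1 ≤ indepNumOn G S := by
  obtain ⟨v, hv⟩ := hS
  have : ({v} : Set V).ncard ≤ indepNumOn G S := by
    refine le_indepNumOn (by simpa using hv) ?_
    rintro a rfl b rfl
    exact G.irrefl
  simpa using this

lemma indepNumOn_mono {S T : Set V} (hST : S ⊆ T) : indepNumOn G S ≤ indepNumOn G T := by
  refine csSup_le (indepSet_nonempty S) ?_
  rintro n ⟨I, hIS, hind, rfl⟩
  exact le_indepNumOn (hIS.trans hST) hind

end Aux2

section Aux3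
variable {V : Type*} [Fintype V] {G : SimpleGraph V}

lemma chain_find {r : V → V → Prop} {P : V → Prop} {a b : V} (h : Relation.ReflTransGen r a b)
    (ha : ¬ P a) (hb : P b) : ∃ x y, r x y ∧ ¬ P x ∧ P y := by
  induction h using Relation.ReflTransGen.head_induction_on with
  | refl => exact absurd hb ha
  | head step _ ih =>
    rename_i c d _
    by_cases hd : P d
    · exact ⟨c, d, step, ha, hd⟩
    · exact ih hd

lemma dom_aux {S : Set V}
    (hcon : ∀ a ∈ S, ∀ b ∈ S, Relation.ReflTransGen (StepRel G S) a b) :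
    ∀ (n : ℕ) (D I : Set V), D.Nonempty → D ⊆ S → I ⊆ D →
    ConnOn G D → (∀ u ∈ I, ∀ v ∈ I, ¬ G.Adj u v) → D.ncard ≤ 2 * I.ncard →
    (S \ {v | v ∈ D ∨ ∃ d ∈ D, G.Adj v d}).ncard ≤ n →
    ∃ D' I' : Set V, D' ⊆ S ∧ I' ⊆ D' ∧ ConnOn G D' ∧
      (∀ u ∈ I', ∀ v ∈ I', ¬ G.Adj u v) ∧
      D'.ncard ≤ 2 * I'.ncard ∧ ∀ v ∈ S, v ∈ D' ∨ ∃ d ∈ D', G.Adj v d := by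
  intro n
  induction n with
  | zero =>
    intro D I hDne hDS hID hDconn hInd hcount hU
    refine ⟨D, I, hDS, hID, hDconn, hInd, hcount, ?_⟩
    intro v hv
    by_contra hvd
    have hvU : v ∈ S \ {v | v ∈ D ∨ ∃ d ∈ D, G.Adj v d} := ⟨hv, hvd⟩
    have := (Set.ncard_pos (Set.toFinite _)).mpr ⟨v, hvU⟩
    omega
  | succ n ih =>
    intro D I hDne hDS hID hDconn hInd hcount hU
    by_cases hdom : ∀ v ∈ S, v ∈ D ∨ ∃ d ∈ D, G.Adj v d
    · exact ⟨D, I, hDS, hID, hDconn, hInd, hcount, hdom⟩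
    · push_neg at hdom
      obtain ⟨u, hu, huD, huN⟩ := hdom
      have huP : ¬ (u ∈ D ∨ ∃ d ∈ D, G.Adj u d) := by
        rintro (h | ⟨d, hd, hadj⟩)
        · exact huD h
        · exact huN d hd hadj
      obtain ⟨d₀, hd₀⟩ := hDne
      obtain ⟨x, y, hxy, hPx, hPy⟩ := chain_find (P := fun v => v ∈ D ∨ ∃ d ∈ D, G.Adj v d)
        (hcon u hu d₀ (hDS hd₀)) huP (Or.inl hd₀)
      obtain ⟨hxS, hyS, hxyAdj⟩ := hxy
      have hxD : x ∉ D := fun h => hPx (Or.inl h)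
      have hyD : y ∉ D := by
        intro h
        exact hPx (Or.inr ⟨y, h, hxyAdj⟩)
      obtain ⟨d, hd, hyd⟩ : ∃ d ∈ D, G.Adj y d := by
        rcases hPy with h | h
        · exact absurd h hyD
        · exact h
      have hxy' : x ≠ y := by
        rintro rfl
        exact hPx hPy
      have hxyD : x ∉ insert y D := by
        rintro (rfl | h)
        · exact hxy' rfl
        · exact hxD h
      have hxI : x ∉ I := fun h => hxD (hID h)
      set D' := insert x (insert y D) with hD'
      set I' := insert x I with hI'
      have hD'S : D' ⊆ S := by
        rintro z (rfl | rfl | hz)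
        · exact hxS
        · exact hyS
        · exact hDS hz
      have hI'D' : I' ⊆ D' := by
        rintro z (rfl | hz)
        · exact Set.mem_insert _ _
        · exact Set.subset_insert _ _ (Set.subset_insert _ _ (hID hz))
      have hD'conn : ConnOn G D' :=
        (hDconn.insert hd hyd).insert (Set.mem_insert _ _) hxyAdj
      have hI'nd : ∀ u' ∈ I', ∀ v' ∈ I', ¬ G.Adj u' v' := by
        rintro a (rfl | ha) b (rfl | hb)
        · exact G.irrefl
        · exact fun h => hPx (Or.inr ⟨b, hID hb, h⟩)
        · exact fun h => hPx (Or.inr ⟨a, hID ha, h.symm⟩)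
        · exact hInd a ha b hb
      have hcount' : D'.ncard ≤ 2 * I'.ncard := by
        rw [hD', hI', Set.ncard_insert_of_notMem hxyD (Set.toFinite _),
          Set.ncard_insert_of_notMem hyD (Set.toFinite _),
          Set.ncard_insert_of_notMem hxI (Set.toFinite _)]
        omega
      have hmono : ∀ v, (v ∈ D ∨ ∃ d' ∈ D, G.Adj v d') → (v ∈ D' ∨ ∃ d' ∈ D', G.Adj v d') := by
        rintro v (h | ⟨d', hd', h⟩)
        · exact Or.inl (hI'D' (Set.mem_insert _ _) |> fun _ => (Set.subset_insert _ _ (Set.subset_insert _ _ h)))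
        · exact Or.inr ⟨d', Set.subset_insert _ _ (Set.subset_insert _ _ hd'), h⟩
      have hUss : (S \ {v | v ∈ D' ∨ ∃ d' ∈ D', G.Adj v d'}) ⊂
          (S \ {v | v ∈ D ∨ ∃ d' ∈ D, G.Adj v d'}) := by
        constructor
        · rintro v ⟨hvS, hv⟩
          exact ⟨hvS, fun h => hv (hmono v h)⟩
        · intro hsub
          have hxin : x ∈ S \ {v | v ∈ D ∨ ∃ d' ∈ D, G.Adj v d'} := ⟨hxS, hPx⟩
          have := hsub hxin
          exact this.2 (Or.inl (Set.mem_insert _ _))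
      have hU' : (S \ {v | v ∈ D' ∨ ∃ d' ∈ D', G.Adj v d'}).ncard ≤ n := by
        have := Set.ncard_lt_ncard hUss (Set.toFinite _)
        omega
      exact ih D' I' ⟨x, Set.mem_insert _ _⟩ hD'S hI'D' hD'conn hI'nd hcount' hU'

lemma exists_dominating {S : Set V} (hS : ConnOn G S) :
    ∃ D : Set V, D ⊆ S ∧ ConnOn G D ∧ D.ncard ≤ 2 * indepNumOn G S ∧
      ∀ v ∈ S, v ∈ D ∨ ∃ d ∈ D, G.Adj v d := by
  obtain ⟨⟨v₀, hv⟩, hcon⟩ := hS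
  obtain ⟨D, I, hDS, hID, hDconn, hInd, hcount, hdom⟩ :=
    dom_aux hcon (S \ {v | v ∈ ({v₀} : Set V) ∨ ∃ d ∈ ({v₀} : Set V), G.Adj v d}).ncard
      {v₀} {v₀} ⟨v₀, rfl⟩ (by simpa using hv) subset_rfl (connOn_singleton v₀)
      (by rintro a rfl b rfl; exact G.irrefl) (by simp) le_rfl
  exact ⟨D, hDS, hDconn, le_trans hcount (by
    have := le_indepNumOn (G := G) (hID.trans hDS) hInd
    omega), hdom⟩

end Aux3

section Aux4
variable {V : Type*} [Fintype V] {G : SimpleGraph V}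

omit [Fintype V] in
lemma cliqueMinorIn_mono {S T : Set V} (hST : S ⊆ T) {k : ℕ} :
    CliqueMinorIn G S k → CliqueMinorIn G T k := by
  rintro ⟨X, hsub, hconn, hdisj, hadj⟩
  exact ⟨X, fun i => (hsub i).trans hST, hconn, hdisj, hadj⟩

omit [Fintype V] in
lemma cliqueMinorIn_zero {S : Set V} : CliqueMinorIn G S 0 :=
  ⟨Fin.elim0, fun i => i.elim0, fun i => i.elim0, fun i => i.elim0, fun i => i.elim0⟩

omit [Fintype V] in
lemma cliqueMinorIn_one {S : Set V} (hS : S.Nonempty) : CliqueMinorIn G S 1 := by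
  obtain ⟨v, hv⟩ := hS
  refine ⟨fun _ => {v}, fun _ => by simpa using hv, fun _ => connOn_singleton v, ?_, ?_⟩
  · intro i j hij; exact absurd (Subsingleton.elim i j) hij
  · intro i j hij; exact absurd (Subsingleton.elim i j) hij

omit [Fintype V] in
lemma cliqueMinorIn_lift {S D : Set V} {k : ℕ} (hDS : D ⊆ S) (hD : ConnOn G D)
    (hdom : ∀ v ∈ S, v ∈ D ∨ ∃ d ∈ D, G.Adj v d)
    (h : CliqueMinorIn G (S \ D) k) : CliqueMinorIn G S (k + 1) := by
  obtain ⟨X, hsub, hconn, hdisj, hadj⟩ := h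
  refine ⟨Fin.cons D X, ?_, ?_, ?_, ?_⟩
  · intro i
    induction i using Fin.cases with
    | zero => simpa using hDS
    | succ i => simpa using (hsub i).trans Set.diff_subset
  · intro i
    induction i using Fin.cases with
    | zero => simpa using hD
    | succ i => simpa using hconn i
  · intro i j hij
    induction i using Fin.cases with
    | zero =>
      induction j using Fin.cases with
      | zero => exact absurd rfl hij
      | succ j =>
        simp only [Fin.cons_zero, Fin.cons_succ]
        exact (Set.disjoint_sdiff_right.mono_right (hsub j)).symm.symm |>.mono_right le_rfl
    | succ i =>
      induction j using Fin.cases with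
      | zero =>
        simp only [Fin.cons_zero, Fin.cons_succ]
        exact (Set.disjoint_sdiff_right.mono_right (hsub i)).symm
      | succ j =>
        simp only [Fin.cons_succ]
        exact hdisj i j (fun h => hij (by rw [h]))
  · intro i j hij
    have key : ∀ j : Fin k, ∃ a ∈ D, ∃ b ∈ X j, G.Adj a b := by
      intro j
      obtain ⟨b, hb⟩ := (hconn j).1
      obtain ⟨hbS, hbD⟩ := hsub j hb
      rcases hdom b hbS with h | ⟨d, hd, hbd⟩
      · exact absurd h hbD
      · exact ⟨d, hd, b, hb, hbd.symm⟩
    induction i using Fin.cases with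
    | zero =>
      induction j using Fin.cases with
      | zero => exact absurd rfl hij
      | succ j =>
        simp only [Fin.cons_zero, Fin.cons_succ]
        exact key j
    | succ i =>
      induction j using Fin.cases with
      | zero =>
        simp only [Fin.cons_zero, Fin.cons_succ]
        obtain ⟨a, ha, b, hb, hab⟩ := key i
        exact ⟨b, hb, a, ha, hab.symm⟩
      | succ j =>
        simp only [Fin.cons_succ]
        exact hadj i j (fun h => hij (by rw [h]))

lemma ncard_le_fintype (S : Set V) : S.ncard ≤ Fintype.card V := by
  calc S.ncard ≤ (Set.univ : Set V).ncard := Set.ncard_le_ncard (Set.subset_univ S) Set.finite_univ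
    _ = Fintype.card V := by rw [Set.ncard_univ, Nat.card_eq_fintype_card]

lemma core_DM : ∀ (n t : ℕ) (S : Set V), t * (Fintype.card V + 1) + S.ncard ≤ n →
    ¬ CliqueMinorIn G S t → S.ncard ≤ 2 * (t - 1) * indepNumOn G S := by
  intro n
  induction n with
  | zero =>
    intro t S hm hnot
    have h0 : t * (Fintype.card V + 1) = 0 :=
      Nat.eq_zero_of_le_zero (le_trans (Nat.le_add_right _ _) hm)
    have ht : t = 0 := by
      rcases Nat.mul_eq_zero.mp h0 with h | h
      · exact h
      · omega
    exact absurd (ht ▸ cliqueMinorIn_zero) hnot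
  | succ n ih =>
    intro t S hm hnot
    match t with
    | 0 => exact absurd cliqueMinorIn_zero hnot
    | 1 =>
      by_cases hS : S.Nonempty
      · exact absurd (cliqueMinorIn_one hS) hnot
      · rw [Set.not_nonempty_iff_eq_empty] at hS
        simp [hS]
    | (s+2) =>
      by_cases hS : S.Nonempty
      swap
      · rw [Set.not_nonempty_iff_eq_empty] at hS
        simp [hS]
      obtain ⟨v, hv⟩ := hS
      set C := {x ∈ S | Relation.ReflTransGen (StepRel G S) v x} with hCdef
      have hCsub : C ⊆ S := fun x hx => hx.1
      have hvC : v ∈ C := ⟨hv, Relation.ReflTransGen.refl⟩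
      by_cases hC : C = S
      · -- connected case
        have hconnS : ConnOn G S := by
          refine ⟨⟨v, hv⟩, fun a ha b hb => ?_⟩
          have hac : a ∈ C := hC ▸ ha
          have hbc : b ∈ C := hC ▸ hb
          exact (chain_symm hac.2).trans hbc.2
        obtain ⟨D, hDS, hDconn, hDcard, hdom⟩ := exists_dominating hconnS
        set T := S \ D with hTdef
        have hTnot : ¬ CliqueMinorIn G T (s + 1) := fun h =>
          hnot (cliqueMinorIn_lift hDS hDconn hdom h)
        have hTle : T.ncard ≤ Fintype.card V := ncard_le_fintype T
        have hmeas : (s + 1) * (Fintype.card V + 1) + T.ncard ≤ n := by nlinarith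
        have hT := ih (s + 1) T hmeas hTnot
        have hmono : indepNumOn G T ≤ indepNumOn G S := indepNumOn_mono Set.diff_subset
        have hsum : T.ncard + D.ncard = S.ncard :=
          Set.ncard_diff_add_ncard_of_subset hDS (Set.toFinite S)
        have h1 : 2 * s * indepNumOn G T ≤ 2 * s * indepNumOn G S :=
          Nat.mul_le_mul_left _ hmono
        have hfin : S.ncard ≤ 2 * (s + 1) * indepNumOn G S := by
          have : 2 * s * indepNumOn G S + 2 * indepNumOn G S
              = 2 * (s + 1) * indepNumOn G S := by ring
          simp only [Nat.add_sub_cancel] at hT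
          omega
        simpa using hfin
      · -- disconnected case
        have hCss : C ⊂ S := hCsub.ssubset_of_ne hC
        have hdiffne : (S \ C).Nonempty := Set.nonempty_of_ssubset hCss
        have hclose : ∀ a ∈ C, ∀ b ∈ S, G.Adj a b → b ∈ C := by
          rintro a ⟨haS, hch⟩ b hbS hadj
          exact ⟨hbS, hch.tail ⟨haS, hbS, hadj⟩⟩
        have hCnot : ¬ CliqueMinorIn G C (s + 2) := fun h => hnot (cliqueMinorIn_mono hCsub h)
        have hDnot : ¬ CliqueMinorIn G (S \ C) (s + 2) := fun h =>
          hnot (cliqueMinorIn_mono Set.diff_subset h)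
        have hsum : (S \ C).ncard + C.ncard = S.ncard :=
          Set.ncard_diff_add_ncard_of_subset hCsub (Set.toFinite S)
        have hClt : C.ncard < S.ncard := Set.ncard_lt_ncard hCss (Set.toFinite S)
        have hCpos : 0 < C.ncard := (Set.ncard_pos (Set.toFinite C)).mpr ⟨v, hvC⟩
        have hmeas1 : (s + 2) * (Fintype.card V + 1) + C.ncard ≤ n := by omega
        have hmeas2 : (s + 2) * (Fintype.card V + 1) + (S \ C).ncard ≤ n := by omega
        have h1 := ih (s + 2) C hmeas1 hCnot
        have h2 := ih (s + 2) (S \ C) hmeas2 hDnot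
        -- superadditivity of independence number
        obtain ⟨I₁, hI₁sub, hI₁ind, hI₁card⟩ := indepNumOn_attained (G := G) C
        obtain ⟨I₂, hI₂sub, hI₂ind, hI₂card⟩ := indepNumOn_attained (G := G) (S \ C)
        have hIdisj : Disjoint I₁ I₂ :=
          (Set.disjoint_sdiff_right.mono hI₁sub hI₂sub)
        have hIind : ∀ u ∈ I₁ ∪ I₂, ∀ w ∈ I₁ ∪ I₂, ¬ G.Adj u w := by
          rintro u (hu | hu) w (hw | hw)
          · exact hI₁ind u hu w hw
          · intro hadj
            exact (hI₂sub hw).2 (hclose u (hI₁sub hu) w (hI₂sub hw).1 hadj)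
          · intro hadj
            exact (hI₂sub hu).2 (hclose w (hI₁sub hw) u (hI₂sub hu).1 hadj.symm)
          · exact hI₂ind u hu w hw
        have hadd : indepNumOn G C + indepNumOn G (S \ C) ≤ indepNumOn G S := by
          have hcard : (I₁ ∪ I₂).ncard = I₁.ncard + I₂.ncard :=
            Set.ncard_union_eq hIdisj (Set.toFinite _) (Set.toFinite _)
          have := le_indepNumOn (G := G)
            (Set.union_subset (hI₁sub.trans hCsub) (hI₂sub.trans Set.diff_subset)) hIind
          omega
        have hmul := Nat.mul_le_mul_left (2 * (s + 1)) hadd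
        rw [show s + 2 - 1 = s + 1 from rfl] at h1 h2 ⊢
        calc S.ncard = (S \ C).ncard + C.ncard := hsum.symm
          _ ≤ 2 * (s + 1) * indepNumOn G (S \ C) + 2 * (s + 1) * indepNumOn G C :=
              Nat.add_le_add h2 h1
          _ = 2 * (s + 1) * (indepNumOn G C + indepNumOn G (S \ C)) := by ring
          _ ≤ 2 * (s + 1) * indepNumOn G S := hmul

end Aux4

lemma indepNumOn_le_coe {V : Type*} [Fintype V] {G : SimpleGraph V} (H : G.Subgraph) :
    indepNumOn G H.verts ≤ _root_.indepNum H.coe := by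
  refine csSup_le (indepSet_nonempty _) ?_
  rintro n ⟨I, hIS, hind, rfl⟩
  have hbdd : BddAbove {n | ∃ I : Set ↥H.verts,
      (∀ u ∈ I, ∀ v ∈ I, ¬ H.coe.Adj u v) ∧ I.ncard = n} := by
    refine ⟨Nat.card ↥H.verts, ?_⟩
    rintro n ⟨I, -, rfl⟩
    calc I.ncard ≤ (Set.univ : Set ↥H.verts).ncard :=
          Set.ncard_le_ncard (Set.subset_univ I) (Set.toFinite _)
      _ = Nat.card ↥H.verts := Set.ncard_univ _
  refine le_csSup hbdd ⟨(Subtype.val ⁻¹' I : Set ↥H.verts), ?_, ?_⟩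
  · intro u hu v hv hadj
    exact hind u.1 hu v.1 hv (H.adj_sub hadj)
  · have himg : (Subtype.val : ↥H.verts → V) '' (Subtype.val ⁻¹' I) = I := by
      rw [Set.image_preimage_eq_inter_range, Subtype.range_coe]
      exact Set.inter_eq_self_of_subset_left hIS
    calc ((Subtype.val : ↥H.verts → V) ⁻¹' I).ncard
        = ((Subtype.val : ↥H.verts → V) '' (Subtype.val ⁻¹' I)).ncard :=
          (Set.ncard_image_of_injective _ Subtype.val_injective).symm
      _ = I.ncard := by rw [himg]

/-- Duchet–Meyniel: if `G` has no `K_t` minor, then every non-empty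
subgraph `H` satisfies `|V(H)| ≤ 2(t−1)·α(H)`; equivalently `ρ(G) ≤ 2(t−1)`. -/
theorem stmt_15 {V : Type*} [Fintype V] (G : SimpleGraph V) (t : ℕ) (ht : 1 ≤ t)
    (hG : ¬ HasMinor G (⊤ : SimpleGraph (Fin t))) :
    (∀ H : G.Subgraph, H.verts.Nonempty →
      H.verts.ncard ≤ 2 * (t - 1) * _root_.indepNum H.coe) ∧
    hallRatio G ≤ 2 * ((t : ℝ) - 1) := by
  have hnc : ¬ CliqueMinorIn G Set.univ t := by
    rintro ⟨X, hsub, hconn, hdisj, hadj⟩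
    exact hG ⟨X, fun w => (hconn w).induce_connected, hdisj,
      fun w₁ w₂ h => hadj w₁ w₂ h.ne⟩
  have key : ∀ S : Set V, S.ncard ≤ 2 * (t - 1) * indepNumOn G S := fun S =>
    core_DM (t * (Fintype.card V + 1) + S.ncard) t S le_rfl
      (fun h => hnc (cliqueMinorIn_mono (Set.subset_univ S) h))
  constructor
  · intro H _
    calc H.verts.ncard ≤ 2 * (t - 1) * indepNumOn G H.verts := key _
      _ ≤ 2 * (t - 1) * _root_.indepNum H.coe := Nat.mul_le_mul_left _ (indepNumOn_le_coe H)
  · have ht' : (1 : ℝ) ≤ (t : ℝ) := by exact_mod_cast ht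
    refine Real.sSup_le ?_ (by linarith)
    rintro x ⟨S, hSne, rfl⟩
    have hk := key S
    have hα : 1 ≤ indepNumOn G S := one_le_indepNumOn hSne
    have hαpos : (0 : ℝ) < (indepNumOn G S : ℝ) := by exact_mod_cast hα
    rw [div_le_iff₀ hαpos]
    have hcast : ((2 * (t - 1) * indepNumOn G S : ℕ) : ℝ)
        = 2 * ((t : ℝ) - 1) * (indepNumOn G S : ℝ) := by
      push_cast [Nat.cast_sub ht]
      ring
    calc (S.ncard : ℝ) ≤ ((2 * (t - 1) * indepNumOn G S : ℕ) : ℝ) := Nat.cast_le.mpr hk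
      _ = 2 * ((t : ℝ) - 1) * (indepNumOn G S : ℝ) := hcast
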